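/- For all integers 1 ≤ N_P < N_A and every δ ∈ (0,1), the following deterministic inequality holds: (1/N_P)·Σ_{i=1}^{N_P} √( 2·log( (e·N_A/i)·(N_P/δ)^{1/i} ) ) ≤ 3·√(2·log(1/δ)) + 7·√(2·log(e·N_A/N_P)) + π/(2·N_P). -/
import Mathlib

lemma my_sqrt_add (a b : ℝ) (ha : 0 ≤ a) (hb : 0 ≤ b) :
    Real.sqrt (a + b) ≤ Real.sqrt a + Real.sqrt b := by
  have h : a + b ≤ (Real.sqrt a + Real.sqrt b) ^ 2 := by
    nlinarith [Real.sq_sqrt ha, Real.sq_sqrt hb, Real.sqrt_nonneg a, Real.sqrt_nonneg b]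
  calc Real.sqrt (a + b) ≤ Real.sqrt ((Real.sqrt a + Real.sqrt b) ^ 2) := Real.sqrt_le_sqrt h
    _ = Real.sqrt a + Real.sqrt b := Real.sqrt_sq (by positivity)

lemma my_sqrt_add4 (a b c d : ℝ) (ha : 0 ≤ a) (hb : 0 ≤ b) (hc : 0 ≤ c) (hd : 0 ≤ d) :
    Real.sqrt (a + b + c + d) ≤ Real.sqrt a + Real.sqrt b + Real.sqrt c + Real.sqrt d := by
  calc Real.sqrt (a + b + c + d) ≤ Real.sqrt (a + b + c) + Real.sqrt d :=
        my_sqrt_add _ _ (by linarith) hd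
    _ ≤ (Real.sqrt (a + b) + Real.sqrt c) + Real.sqrt d := by
        gcongr; exact my_sqrt_add _ _ (by linarith) hc
    _ ≤ Real.sqrt a + Real.sqrt b + Real.sqrt c + Real.sqrt d := by
        gcongr; exact my_sqrt_add _ _ ha hb

lemma my_sum_inv_sqrt (n : ℕ) :
    ∑ i ∈ Finset.Icc 1 n, 1 / Real.sqrt i ≤ 2 * Real.sqrt n := by
  induction n with
  | zero => simp
  | succ n ih =>
    rw [Finset.sum_Icc_succ_top (by omega)]
    have key : 1 / Real.sqrt (n + 1 : ℕ) ≤ 2 * Real.sqrt (n + 1 : ℕ) - 2 * Real.sqrt n := by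
      have ht : (0 : ℝ) < Real.sqrt (n + 1 : ℕ) := by
        apply Real.sqrt_pos.2; push_cast; positivity
      rw [div_le_iff₀ ht]
      have h1 : Real.sqrt (n + 1 : ℕ) ^ 2 = (n : ℝ) + 1 := by
        rw [Real.sq_sqrt (by positivity)]; push_cast; ring
      have h2 : Real.sqrt n ^ 2 = (n : ℝ) := Real.sq_sqrt (by positivity)
      nlinarith [sq_nonneg (Real.sqrt (n + 1 : ℕ) - Real.sqrt n), Real.sqrt_nonneg n, ht]
    linarith

theorem stmt14 (NP NA : ℕ) (hNP : 1 ≤ NP) (hlt : NP < NA)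
    (δ : ℝ) (hδ : δ ∈ Set.Ioo (0 : ℝ) 1) :
    (1 / (NP : ℝ)) * ∑ i ∈ Finset.Icc 1 NP,
        Real.sqrt (2 * Real.log ((Real.exp 1 * NA / (i : ℝ)) *
          ((NP : ℝ) / δ) ^ (1 / (i : ℝ)))) ≤
      3 * Real.sqrt (2 * Real.log (1 / δ)) +
        7 * Real.sqrt (2 * Real.log (Real.exp 1 * NA / NP)) + Real.pi / (2 * NP) := by
  obtain ⟨hδ0, hδ1⟩ := hδ
  have hNP0 : (0 : ℝ) < NP := by exact_mod_cast hNP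
  have hNP1 : (1 : ℝ) ≤ NP := by exact_mod_cast hNP
  have hNA0 : (0 : ℝ) < NA := by exact_mod_cast (hNP.trans hlt.le)
  have hNPNA : (NP : ℝ) ≤ NA := by exact_mod_cast hlt.le
  set L : ℝ := Real.log (Real.exp 1 * NA / NP) with hLdef
  set D : ℝ := Real.log (1 / δ) with hDdef
  set P : ℝ := Real.log NP with hPdef
  have hD0 : 0 ≤ D := Real.log_nonneg (by rw [le_div_iff₀ hδ0]; linarith)
  have hP0 : 0 ≤ P := Real.log_nonneg hNP1
  have hPNP : P ≤ (NP : ℝ) := by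
    have := Real.log_le_sub_one_of_pos hNP0
    linarith
  have hL1 : 1 ≤ L := by
    rw [hLdef]
    calc (1 : ℝ) = Real.log (Real.exp 1) := (Real.log_exp 1).symm
      _ ≤ Real.log (Real.exp 1 * NA / NP) := by
          apply Real.log_le_log (Real.exp_pos 1)
          rw [le_div_iff₀ hNP0]
          exact mul_le_mul_of_nonneg_left hNPNA (Real.exp_pos 1).le
  have hL0 : 0 ≤ L := by linarith
  set c : ℝ := 2 * Real.sqrt (2 * NP) + Real.sqrt (2 * D) with hcdef
  have hc0 : 0 ≤ c := by positivity
  -- pointwise bound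
  have hpt : ∀ i ∈ Finset.Icc 1 NP,
      Real.sqrt (2 * Real.log ((Real.exp 1 * NA / (i : ℝ)) *
          ((NP : ℝ) / δ) ^ (1 / (i : ℝ)))) ≤
      Real.sqrt (2 * L) + c * (1 / Real.sqrt i) := by
    intro i hi
    rw [Finset.mem_Icc] at hi
    obtain ⟨hi1, hi2⟩ := hi
    have hi0 : (0 : ℝ) < i := by exact_mod_cast hi1
    have hi1' : (1 : ℝ) ≤ i := by exact_mod_cast hi1
    have hi2' : (i : ℝ) ≤ NP := by exact_mod_cast hi2
    have hsi : (0 : ℝ) < Real.sqrt i := Real.sqrt_pos.2 hi0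
    have hlogi0 : 0 ≤ Real.log i := Real.log_nonneg hi1'
    have hlogiP : Real.log i ≤ P := Real.log_le_log hi0 hi2'
    have hlog : Real.log ((Real.exp 1 * NA / (i : ℝ)) * ((NP : ℝ) / δ) ^ (1 / (i : ℝ)))
        = L + (P - Real.log i) + 1 / i * P + 1 / i * D := by
      rw [Real.log_mul (by positivity) (by positivity),
          Real.log_rpow (by positivity),
          Real.log_div (by positivity) (by positivity),
          Real.log_div (by positivity) (by positivity),
          Real.log_mul (Real.exp_ne_zero 1) (by positivity),
          Real.log_exp]
      rw [hLdef, hDdef, hPdef,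
          Real.log_div (by positivity) (by positivity),
          Real.log_div (by positivity) (by positivity),
          Real.log_mul (Real.exp_ne_zero 1) (by positivity),
          Real.log_exp, Real.log_one]
      ring
    rw [hlog, show 2 * (L + (P - Real.log i) + 1 / (i : ℝ) * P + 1 / i * D)
        = 2 * L + 2 * (P - Real.log i) + 2 * P / i + 2 * D / i by ring]
    have hb := my_sqrt_add4 (2 * L) (2 * (P - Real.log i)) (2 * P / i) (2 * D / i)
      (by linarith) (by linarith) (by positivity) (by positivity)
    refine hb.trans ?_
    have hm1 : Real.sqrt (2 * (P - Real.log i)) ≤ Real.sqrt (2 * NP / i) := by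
      apply Real.sqrt_le_sqrt
      have h1 : P - Real.log i = Real.log ((NP : ℝ) / i) := by
        rw [Real.log_div (by positivity) (by positivity)]
      have h2 : Real.log ((NP : ℝ) / i) ≤ (NP : ℝ) / i - 1 :=
        Real.log_le_sub_one_of_pos (by positivity)
      rw [h1, mul_div_assoc]
      linarith
    have hm2 : Real.sqrt (2 * P / i) ≤ Real.sqrt (2 * NP / i) := by
      apply Real.sqrt_le_sqrt
      gcongr
    have hdiv1 : Real.sqrt (2 * NP / i) = Real.sqrt (2 * NP) / Real.sqrt i :=
      Real.sqrt_div (by positivity) _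
    have hdiv2 : Real.sqrt (2 * D / i) = Real.sqrt (2 * D) / Real.sqrt i :=
      Real.sqrt_div (by positivity) _
    rw [hdiv1] at hm1 hm2
    rw [hdiv2]
    have : c * (1 / Real.sqrt i)
        = Real.sqrt (2 * NP) / Real.sqrt i + Real.sqrt (2 * NP) / Real.sqrt i
          + Real.sqrt (2 * D) / Real.sqrt i := by
      rw [hcdef]; field_simp; ring
    rw [this]
    linarith
  -- sum up
  have hsum : ∑ i ∈ Finset.Icc 1 NP,
      Real.sqrt (2 * Real.log ((Real.exp 1 * NA / (i : ℝ)) *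
          ((NP : ℝ) / δ) ^ (1 / (i : ℝ))))
      ≤ NP * Real.sqrt (2 * L) + c * (2 * Real.sqrt NP) := by
    calc _ ≤ ∑ i ∈ Finset.Icc 1 NP, (Real.sqrt (2 * L) + c * (1 / Real.sqrt i)) :=
          Finset.sum_le_sum hpt
      _ = NP * Real.sqrt (2 * L) + c * ∑ i ∈ Finset.Icc 1 NP, (1 / Real.sqrt i) := by
          rw [Finset.sum_add_distrib, Finset.sum_const, ← Finset.mul_sum, Nat.card_Icc]
          simp [nsmul_eq_mul]
      _ ≤ NP * Real.sqrt (2 * L) + c * (2 * Real.sqrt NP) := by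
          gcongr
          exact my_sum_inv_sqrt NP
  have hkey : c * (2 * Real.sqrt NP) = 4 * Real.sqrt 2 * NP + 2 * Real.sqrt (2 * D) * Real.sqrt NP := by
    have h1 : Real.sqrt (2 * NP) = Real.sqrt 2 * Real.sqrt NP := Real.sqrt_mul (by norm_num) _
    have h2 : Real.sqrt (NP : ℝ) * Real.sqrt (NP : ℝ) = NP := Real.mul_self_sqrt hNP0.le
    calc c * (2 * Real.sqrt NP)
        = 4 * Real.sqrt 2 * (Real.sqrt NP * Real.sqrt NP)
          + 2 * Real.sqrt (2 * D) * Real.sqrt NP := by rw [hcdef, h1]; ring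
      _ = _ := by rw [h2]
  have hfr : Real.sqrt (NP : ℝ) ≤ (NP : ℝ) := by
    nlinarith [Real.sq_sqrt hNP0.le, Real.sqrt_nonneg (NP : ℝ)]
  have h2L : Real.sqrt 2 ≤ Real.sqrt (2 * L) := Real.sqrt_le_sqrt (by linarith)
  have hpi : 0 ≤ Real.pi / (2 * NP) := by positivity
  have hDnn : 0 ≤ Real.sqrt (2 * D) := Real.sqrt_nonneg _
  have hLnn : 0 ≤ Real.sqrt (2 * L) := Real.sqrt_nonneg _
  have hstep : (1 / (NP : ℝ)) * ∑ i ∈ Finset.Icc 1 NP,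
      Real.sqrt (2 * Real.log ((Real.exp 1 * NA / (i : ℝ)) *
          ((NP : ℝ) / δ) ^ (1 / (i : ℝ))))
      ≤ Real.sqrt (2 * L) + 4 * Real.sqrt 2 + 2 * Real.sqrt (2 * D) * (Real.sqrt NP / NP) := by
    calc _ ≤ (1 / (NP : ℝ)) * (NP * Real.sqrt (2 * L) + c * (2 * Real.sqrt NP)) := by
          apply mul_le_mul_of_nonneg_left hsum (by positivity)
      _ = Real.sqrt (2 * L) + 4 * Real.sqrt 2 + 2 * Real.sqrt (2 * D) * (Real.sqrt NP / NP) := by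
          rw [hkey]; field_simp; ring
  refine hstep.trans ?_
  have hfr2 : Real.sqrt (NP : ℝ) / NP ≤ 1 := by
    rw [div_le_one hNP0]; exact hfr
  have h3 : 2 * Real.sqrt (2 * D) * (Real.sqrt NP / NP) ≤ 2 * Real.sqrt (2 * D) := by
    nlinarith [Real.sqrt_nonneg (NP : ℝ), div_nonneg (Real.sqrt_nonneg (NP : ℝ)) hNP0.le]
  linarith
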